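/- Let κ ∈ ℕ, κ ≥ 2, and a_0,…,a_{κ−1} ∈ ℝ, and define the planar vector field V : ℝ² → ℝ² by V(w, θ) = ( w·(−sin((κ−1)θ) + Σ_{α=0}^{κ−1} a_α w^{κ−α} sin((α−1)θ)), −cos((κ−1)θ) + Σ_{α=0}^{κ−1} a_α w^{κ−α} cos((α−1)θ) ). Then the zeros of V on the line {w = 0} with θ ∈ [0, 2π) are exactly the 2(κ−1) points (0, θ_l) with θ_l = π(l−1)/(κ−1) + π/(2(κ−1)), l ∈ {1,…,2(κ−1)}; moreover at each such point V is differentiable and its Jacobian matrix DV(0, θ_l) is lower triangular with diagonal entries (−1)^l and (κ−1)(−1)^{l−1}. In particular det DV(0, θ_l) = −(κ−1) < 0, so each (0, θ_l) is a hyperbolic saddle. -/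

import Mathlib

open Finset Real

/-- The desingularized Poincaré compactification at infinity of `x' = iQ(x)`.
With `V(w,θ) = (w(-sin((κ-1)θ) + Σ_α a_α w^{κ-α} sin((α-1)θ)),
-cos((κ-1)θ) + Σ_α a_α w^{κ-α} cos((α-1)θ))`, the zeros of `V` on `{w = 0}` with
`θ ∈ [0, 2π)` are exactly the points `(0, θ_l)`, `θ_l = π(l-1)/(κ-1) + π/(2(κ-1))`,
`l ∈ {1,…,2(κ-1)}`; at each such point `V` is differentiable with lower-triangular
Jacobian of diagonal entries `(-1)^l` and `(κ-1)(-1)^{l-1}` (a hyperbolic saddle). -/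
theorem zeroHopf_saddles_at_infinity_imag_time
    (κ : ℕ) (hκ : 2 ≤ κ) (a : ℕ → ℝ)
    (V : ℝ × ℝ → ℝ × ℝ)
    (hV : V = fun p : ℝ × ℝ =>
      (p.1 * (-Real.sin (((κ : ℝ) - 1) * p.2) +
          ∑ α ∈ Finset.range κ, a α * p.1 ^ (κ - α) * Real.sin (((α : ℝ) - 1) * p.2)),
        -Real.cos (((κ : ℝ) - 1) * p.2) +
          ∑ α ∈ Finset.range κ, a α * p.1 ^ (κ - α) * Real.cos (((α : ℝ) - 1) * p.2))) :
    (∀ θ ∈ Set.Ico (0 : ℝ) (2 * Real.pi),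
      (V (0, θ) = 0 ↔ ∃ l : ℕ, 1 ≤ l ∧ l ≤ 2 * (κ - 1) ∧
        θ = Real.pi * ((l : ℝ) - 1) / ((κ : ℝ) - 1) + Real.pi / (2 * ((κ : ℝ) - 1)))) ∧
    (∀ l : ℕ, 1 ≤ l → l ≤ 2 * (κ - 1) → ∃ c : ℝ,
      HasFDerivAt V
        ((((-1 : ℝ) ^ l) • (ContinuousLinearMap.fst ℝ ℝ ℝ)).prod
          (c • ContinuousLinearMap.fst ℝ ℝ ℝ +
            ((((κ : ℝ) - 1) * (-1 : ℝ) ^ (l - 1)) • ContinuousLinearMap.snd ℝ ℝ ℝ)))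
        (0, Real.pi * ((l : ℝ) - 1) / ((κ : ℝ) - 1) + Real.pi / (2 * ((κ : ℝ) - 1)))) := by
  subst hV
  have hK : (0:ℝ) < (κ:ℝ) - 1 := by
    have : (2:ℝ) ≤ (κ:ℝ) := by exact_mod_cast hκ
    linarith
  have hKne : ((κ:ℝ) - 1) ≠ 0 := ne_of_gt hK
  have hzp : ∀ α ∈ Finset.range κ, (0:ℝ)^(κ - α) = 0 := fun α hα =>
    zero_pow (Nat.sub_ne_zero_of_lt (Finset.mem_range.mp hα))
  have hsum0 : ∀ f : ℕ → ℝ, (∑ α ∈ Finset.range κ, a α * (0:ℝ) ^ (κ - α) * f α) = 0 := by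
    intro f
    refine Finset.sum_eq_zero fun α hα => ?_
    rw [hzp α hα]
    ring
  constructor
  · -- characterization of the zeros on {w = 0}
    intro θ hθ
    have hVsimp : ((0:ℝ) * (-Real.sin (((κ : ℝ) - 1) * θ) +
            ∑ α ∈ Finset.range κ, a α * (0:ℝ) ^ (κ - α) * Real.sin (((α : ℝ) - 1) * θ)),
          -Real.cos (((κ : ℝ) - 1) * θ) +
            ∑ α ∈ Finset.range κ, a α * (0:ℝ) ^ (κ - α) * Real.cos (((α : ℝ) - 1) * θ)) =
          ((0:ℝ), -Real.cos (((κ : ℝ) - 1) * θ)) := by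
      rw [hsum0, hsum0]; simp
    simp only [hVsimp, Prod.ext_iff, Prod.fst_zero, Prod.snd_zero, neg_eq_zero, add_zero]
    constructor
    · rintro ⟨-, hc⟩
      obtain ⟨n, hn⟩ := Real.cos_eq_zero_iff.mp hc
      have hθval : θ = (2*(n:ℝ)+1) * Real.pi / (2 * ((κ:ℝ)-1)) := by
        field_simp at hn ⊢
        linarith [hn]
      have hn0 : 0 ≤ n := by
        by_contra h
        push_neg at h
        have hn1 : n ≤ -1 := by omega
        have : (2*(n:ℝ)+1) ≤ -1 := by
          have : (n:ℝ) ≤ -1 := by exact_mod_cast hn1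
          linarith
        have hneg : θ < 0 := by
          rw [hθval]
          apply div_neg_of_neg_of_pos
          · nlinarith [Real.pi_pos]
          · linarith
        linarith [hθ.1]
      have hnlt : n + 1 ≤ 2 * ((κ:ℤ) - 1) := by
        by_contra h
        push_neg at h
        have : 2 * ((κ:ℤ) - 1) ≤ n := by omega
        have h2 : 2 * ((κ:ℝ) - 1) ≤ (n:ℝ) := by exact_mod_cast this
        have : 2 * Real.pi ≤ θ := by
          rw [hθval]
          rw [le_div_iff₀ (by linarith)]
          nlinarith [Real.pi_pos]
        linarith [hθ.2]
      refine ⟨n.toNat + 1, le_add_self, ?_, ?_⟩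
      · have : (n.toNat : ℤ) = n := Int.toNat_of_nonneg hn0
        omega
      · have hcast : ((n.toNat + 1 : ℕ) : ℝ) - 1 = (n:ℝ) := by
          have hnn : (n.toNat : ℤ) = n := Int.toNat_of_nonneg hn0
          have h2 : ((n.toNat : ℕ) : ℝ) = (n:ℝ) := by
            exact_mod_cast congrArg (fun z : ℤ => (z:ℝ)) hnn
          push_cast
          rw [h2]
          ring
        rw [hcast, hθval]
        field_simp
    · rintro ⟨l, hl1, hl2, rfl⟩
      refine ⟨trivial, ?_⟩
      have h1 : ((l-1:ℕ):ℝ) = (l:ℝ) - 1 := by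
        have := Nat.cast_sub (R := ℝ) hl1
        simpa using this
      have hKθ : ((κ:ℝ)-1) * (Real.pi * ((l : ℝ) - 1) / ((κ : ℝ) - 1) + Real.pi / (2 * ((κ : ℝ) - 1)))
          = ((l-1:ℕ):ℝ) * Real.pi + Real.pi/2 := by
        rw [h1]
        field_simp
      rw [hKθ, Real.cos_add, Real.cos_pi_div_two, Real.sin_pi_div_two, Real.sin_nat_mul_pi]
      ring
  · -- hyperbolic saddle structure at each zero
    intro l hl1 hl2
    set θ0 : ℝ := Real.pi * ((l : ℝ) - 1) / ((κ : ℝ) - 1) + Real.pi / (2 * ((κ : ℝ) - 1)) with hθ0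
    have h1 : ((l-1:ℕ):ℝ) = (l:ℝ) - 1 := by
      have := Nat.cast_sub (R := ℝ) hl1
      simpa using this
    have hKθ : ((κ:ℝ)-1) * θ0 = ((l-1:ℕ):ℝ) * Real.pi + Real.pi/2 := by
      rw [h1, hθ0]
      field_simp
    have hcosl : Real.cos (((l-1:ℕ):ℝ) * Real.pi) = (-1:ℝ)^(l-1) := by
      simpa using Real.cos_nat_mul_pi_sub 0 (l-1)
    have hsin : Real.sin (((κ:ℝ)-1) * θ0) = (-1:ℝ)^(l-1) := by
      rw [hKθ, Real.sin_add, Real.cos_pi_div_two, Real.sin_pi_div_two, Real.sin_nat_mul_pi, hcosl]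
      ring
    have hpowl : ((-1:ℝ)^l) = -(-1:ℝ)^(l-1) := by
      conv_lhs => rw [show l = (l-1)+1 by omega]
      rw [pow_succ]
      ring
    -- first component
    have hh : DifferentiableAt ℝ (fun p : ℝ×ℝ => -Real.sin (((κ : ℝ) - 1) * p.2) +
        ∑ α ∈ Finset.range κ, a α * p.1 ^ (κ - α) * Real.sin (((α : ℝ) - 1) * p.2)) (0, θ0) := by
      apply DifferentiableAt.add
      · fun_prop
      · apply DifferentiableAt.fun_sum
        intro α hα
        fun_prop
    have hf1 : HasFDerivAt (fun p : ℝ×ℝ => p.1 * (-Real.sin (((κ : ℝ) - 1) * p.2) +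
          ∑ α ∈ Finset.range κ, a α * p.1 ^ (κ - α) * Real.sin (((α : ℝ) - 1) * p.2)))
        (((-1 : ℝ) ^ l) • (ContinuousLinearMap.fst ℝ ℝ ℝ)) (0, θ0) := by
      have hd := (hasFDerivAt_fst (p := ((0:ℝ), θ0))).mul hh.hasFDerivAt
      refine hd.congr_fderiv ?_
      show (0:ℝ) • _ + (-Real.sin (((κ : ℝ) - 1) * θ0) +
          ∑ α ∈ Finset.range κ, a α * (0:ℝ) ^ (κ - α) * Real.sin (((α : ℝ) - 1) * θ0)) •
          (ContinuousLinearMap.fst ℝ ℝ ℝ) = _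
      rw [Finset.sum_eq_zero (fun α hα => by rw [hzp α hα]; ring), hsin, zero_smul, zero_add,
        add_zero, hpowl]
    -- second component
    have hcos : HasFDerivAt (fun p : ℝ×ℝ => Real.cos (((κ:ℝ)-1) * p.2))
        ((-Real.sin (((κ:ℝ)-1)*θ0)) • ((((κ:ℝ)-1)) • ContinuousLinearMap.snd ℝ ℝ ℝ)) (0, θ0) :=
      (Real.hasDerivAt_cos (((κ:ℝ)-1)*θ0)).comp_hasFDerivAt (h₂ := Real.cos) ((0:ℝ),θ0)
        ((hasFDerivAt_snd (𝕜 := ℝ) (p := ((0:ℝ), θ0))).const_mul ((κ:ℝ)-1))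
    have hterm : ∀ α ∈ Finset.range κ,
        HasFDerivAt (fun p : ℝ×ℝ => a α * p.1 ^ (κ - α) * Real.cos (((α : ℝ) - 1) * p.2))
        ((a α * (0:ℝ)^(κ-α)) • ((-Real.sin (((α:ℝ)-1)*θ0)) •
            ((((α:ℝ)-1)) • ContinuousLinearMap.snd ℝ ℝ ℝ)) +
          Real.cos (((α:ℝ)-1)*θ0) • ((a α) •
            (((↑(κ-α):ℝ) * (0:ℝ)^(κ-α-1)) • ContinuousLinearMap.fst ℝ ℝ ℝ)))
        (0, θ0) := by
      intro α hα
      have hu : HasFDerivAt (fun p : ℝ×ℝ => a α * p.1 ^ (κ-α))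
          ((a α) • (((↑(κ-α):ℝ) * (0:ℝ)^(κ-α-1)) • ContinuousLinearMap.fst ℝ ℝ ℝ)) (0,θ0) := by
        have hp : HasFDerivAt (fun p : ℝ×ℝ => p.1 ^ (κ-α))
            (((↑(κ-α):ℝ) * (0:ℝ)^(κ-α-1)) • ContinuousLinearMap.fst ℝ ℝ ℝ) (0,θ0) :=
          (hasDerivAt_pow (κ-α) 0).comp_hasFDerivAt ((0:ℝ),θ0) (hasFDerivAt_fst (p := ((0:ℝ), θ0)))
        exact hp.const_mul (a α)
      have hv : HasFDerivAt (fun p : ℝ×ℝ => Real.cos (((α:ℝ)-1) * p.2))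
          ((-Real.sin (((α:ℝ)-1)*θ0)) • ((((α:ℝ)-1)) • ContinuousLinearMap.snd ℝ ℝ ℝ)) (0,θ0) :=
        (Real.hasDerivAt_cos (((α:ℝ)-1)*θ0)).comp_hasFDerivAt (h₂ := Real.cos) ((0:ℝ),θ0)
          ((hasFDerivAt_snd (𝕜 := ℝ) (p := ((0:ℝ), θ0))).const_mul ((α:ℝ)-1))
      exact hu.mul hv
    have hsum := HasFDerivAt.fun_sum hterm
    have hg := hcos.fun_neg.fun_add hsum
    refine ⟨∑ α ∈ Finset.range κ,
      Real.cos (((α:ℝ)-1)*θ0) * (a α * ((↑(κ-α):ℝ) * (0:ℝ)^(κ-α-1))), ?_⟩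
    refine HasFDerivAt.prodMk hf1 (hg.congr_fderiv ?_)
    rw [hsin]
    refine ContinuousLinearMap.ext fun v => ?_
    simp only [ContinuousLinearMap.add_apply, ContinuousLinearMap.neg_apply,
      ContinuousLinearMap.smul_apply, ContinuousLinearMap.coe_snd', ContinuousLinearMap.coe_fst',
      ContinuousLinearMap.sum_apply, smul_eq_mul]
    rw [Finset.sum_congr rfl (fun α hα =>
      show (a α * (0:ℝ) ^ (κ - α)) * (-Real.sin ((↑α - 1) * θ0) * ((↑α - 1) * v.2)) +
          Real.cos ((↑α - 1) * θ0) * (a α * ((↑(κ - α) * (0:ℝ) ^ (κ - α - 1)) * v.1)) =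
          Real.cos ((↑α - 1) * θ0) * (a α * (↑(κ - α) * (0:ℝ) ^ (κ - α - 1))) * v.1 from by
        rw [hzp α hα]; ring), Finset.sum_mul]
    ring
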